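/- Let n ≥ 6 be odd. Define h* coefficients by h₀ = 1, h₁ = C(n,2) − 2n, h₂ = C(n,4) − n(n−4), and hᵢ = C(n, 2i) for 3 ≤ i ≤ ⌊n/2⌋ (and hᵢ = 0 for i > ⌊n/2⌋). Then for n ≥ 9 this sequence is unimodal: h₀ ≤ h₁ ≤ h₂ and there is an index j with hᵢ₋₁ ≤ hᵢ for i ≤ j and hᵢ ≥ hᵢ₊₁ for i ≥ j. (This is the h*-vector of the 2-stable second hypersimplex Δ_{n,2}^{stab(2)}.) -/
import Mathlib

/-- The h*-vector of the 2-stable second hypersimplex `Δ_{n,2}^{stab(2)}`: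
`h₀ = 1`, `h₁ = C(n,2) − 2n`, `h₂ = C(n,4) − n(n−4)`, `hᵢ = C(n,2i)` for `i ≥ 3`
(which vanishes for `i > ⌊n/2⌋`). -/
def hTwoStable (n : ℕ) : ℕ → ℤ
  | 0 => 1
  | 1 => (n.choose 2 : ℤ) - 2 * n
  | 2 => (n.choose 4 : ℤ) - n * ((n : ℤ) - 4)
  | i => (n.choose (2 * i) : ℤ)

lemma choose_mono_half (n : ℕ) : ∀ a b : ℕ, a ≤ b → 2*b ≤ n → n.choose a ≤ n.choose b := by
  intro a b hab hb
  induction b with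
  | zero => simp [Nat.le_zero.mp hab]
  | succ k ih =>
    rcases Nat.lt_or_ge a (k+1) with h|h
    · exact (ih (by omega) (by omega)).trans
        (Nat.choose_le_succ_of_lt_half_left (by omega))
    · have : a = k+1 := by omega
      simp [this]

lemma choose_mono_gen (n a b : ℕ) (hab : a ≤ b) (h : a + b ≤ n) :
    n.choose a ≤ n.choose b := by
  rcases le_or_gt (2*b) n with h2|h2
  · exact choose_mono_half n a b hab h2
  · have hbn : b ≤ n := by omega
    rw [← Nat.choose_symm hbn]
    exact choose_mono_half n a (n-b) (by omega) (by omega)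

lemma hTwoStable_ge3 (n i : ℕ) (h : 3 ≤ i) : hTwoStable n i = (n.choose (2*i) : ℤ) := by
  obtain ⟨k, rfl⟩ : ∃ k, i = k + 3 := ⟨i - 3, by omega⟩
  rfl

lemma choose4_eq (m : ℕ) : 24 * (m+9).choose 4 = (m+9)*(m+8)*(m+7)*(m+6) := by
  have h := Nat.descFactorial_eq_factorial_mul_choose (m+9) 4
  simp [Nat.descFactorial_succ, Nat.factorial] at h
  rw [← h]; ring

lemma choose2_eq (m : ℕ) : 2 * (m+9).choose 2 = (m+9)*(m+8) := by
  have h := Nat.descFactorial_eq_factorial_mul_choose (m+9) 2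
  simp [Nat.descFactorial_succ, Nat.factorial] at h
  rw [← h]; ring

/-- For odd `n ≥ 9`, the h*-vector of `Δ_{n,2}^{stab(2)}` is unimodal:
`h₀ ≤ h₁ ≤ h₂` and there is an index `j` with `hᵢ₋₁ ≤ hᵢ` for `i ≤ j` and
`hᵢ ≥ hᵢ₊₁` for `i ≥ j`. -/
theorem hTwoStable_unimodal (n : ℕ) (hodd : Odd n) (hn : 9 ≤ n) :
    hTwoStable n 0 ≤ hTwoStable n 1 ∧ hTwoStable n 1 ≤ hTwoStable n 2 ∧
    ∃ j, (∀ i, 1 ≤ i → i ≤ j → hTwoStable n (i - 1) ≤ hTwoStable n i) ∧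
         (∀ i, j ≤ i → hTwoStable n (i + 1) ≤ hTwoStable n i) := by
  obtain ⟨m, rfl⟩ : ∃ m, n = m + 9 := ⟨n - 9, by omega⟩
  have h2 := choose2_eq m
  have h4 := choose4_eq m
  -- h0 ≤ h1
  have A : hTwoStable (m+9) 0 ≤ hTwoStable (m+9) 1 := by
    show (1 : ℤ) ≤ ((m+9).choose 2 : ℤ) - 2 * (m+9)
    have key : 2 * (m+9) + 1 ≤ (m+9).choose 2 := by nlinarith [h2]
    have := (Nat.cast_le (α := ℤ)).mpr key
    push_cast at this ⊢
    linarith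
  have B : hTwoStable (m+9) 1 ≤ hTwoStable (m+9) 2 := by
    show ((m+9).choose 2 : ℤ) - 2 * (m+9) ≤ ((m+9).choose 4 : ℤ) - (m+9) * (((m+9) : ℤ) - 4)
    have hineq : 12*((m+9)*(m+8)) + 24*((m+9)*(m+5)) ≤
        (m+9)*(m+8)*(m+7)*(m+6) + 48*(m+9) := by
      have : (m+9)*(m+8)*(m+7)*(m+6) + 48*(m+9) =
          12*((m+9)*(m+8)) + 24*((m+9)*(m+5)) +
          (m*m*m*m + 30*(m*m*m) + 299*(m*m) + 1158*m + 1512) := by ring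
      omega
    have key : (m+9).choose 2 + (m+9) * (m+5) ≤ (m+9).choose 4 + 2 * (m+9) := by
      nlinarith [h2, h4, hineq]
    have := (Nat.cast_le (α := ℤ)).mpr key
    push_cast at this ⊢
    nlinarith [this]
  refine ⟨A, B, max 3 ((m+10)/4), ?_, ?_⟩
  · intro i hi1 hij
    match i, hi1 with
    | 1, _ => exact A
    | 2, _ => exact B
    | 3, _ =>
      rw [hTwoStable_ge3 (m+9) 3 le_rfl]
      show ((m+9).choose 4 : ℤ) - (m+9) * (((m+9) : ℤ) - 4) ≤ ((m+9).choose 6 : ℤ)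
      rcases Nat.eq_zero_or_pos m with rfl|hm
      · norm_num [Nat.choose]
      · have h46 : (m+9).choose 4 ≤ (m+9).choose 6 := choose_mono_gen (m+9) 4 6 (by omega) (by omega)
        have hc := (Nat.cast_le (α := ℤ)).mpr h46
        have hm0 : (0:ℤ) ≤ (m:ℤ) := by positivity
        push_cast at hc ⊢
        nlinarith [hc, hm0]
    | (k+4), _ =>
      rw [hTwoStable_ge3 (m+9) (k+4) (by omega), show k+4-1 = k+3 from rfl,
        hTwoStable_ge3 (m+9) (k+3) (by omega)]
      have hk : k + 4 ≤ (m+10)/4 := by omega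
      exact_mod_cast choose_mono_gen (m+9) (2*(k+3)) (2*(k+4)) (by omega) (by omega)
  · intro i hij
    have hi3 : 3 ≤ i := le_trans (le_max_left _ _) hij
    have hi4 : (m+10)/4 ≤ i := le_trans (le_max_right _ _) hij
    rw [hTwoStable_ge3 (m+9) i hi3, hTwoStable_ge3 (m+9) (i+1) (by omega)]
    rcases le_or_gt (2*(i+1)) (m+9) with hle|hlt
    · have : (m+9).choose (2*(i+1)) ≤ (m+9).choose (2*i) := by
        rw [← Nat.choose_symm (show 2*(i+1) ≤ m+9 by omega)]
        exact choose_mono_gen (m+9) ((m+9) - 2*(i+1)) (2*i) (by omega) (by omega)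
      exact_mod_cast this
    · rw [Nat.choose_eq_zero_of_lt (by omega)]
      exact_mod_cast Nat.zero_le _
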